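/- Let x ∈ ℚ ∩ [0,1) and z ∈ ℂ with |z| > 1. The sequences (P_n(z))_{n≥0}, (Q_n(z))_{n≥0} and (R_n(z))_{n≥0} each satisfy the linear recurrence A_n X_{n+1} − (z − B_n) X_n + C_n X_{n−1} = 0 for all n ≥ 1, where A_n = (n+x+1)(n+1)/((2n+x+1)(2n+x+2)), B_n = (2n² + (1+x)(2n+x))/((2n+x)(2n+x+2)) and C_n = n(n+x)/((2n+x)(2n+x+1)); moreover A_n → 1/4, B_n → 1/2 and C_n → 1/4 as n → ∞, so the characteristic equation of the recurrence is X² − 2(2z−1)X + 1 = 0. -/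

import Mathlib

open Polynomial Filter

noncomputable section

/-- Pochhammer symbol `(a)_m = a(a+1)⋯(a+m−1)`. -/
def poch (a : ℚ) (m : ℕ) : ℚ := (ascPochhammer ℚ m).eval a

/-- The Padé denominator polynomial `Q_n` evaluated at `z`. -/
def Qval (x : ℚ) (n : ℕ) (z : ℂ) : ℂ :=
  ∑ l ∈ Finset.range (n + 1),
    (((-1 : ℚ) ^ l * poch ((n : ℚ) + 1 + x) (n - l) / (Nat.factorial (n - l)) *
        poch (((n - l : ℕ) : ℚ) + 1 + x) l / (Nat.factorial l) : ℚ) : ℂ) * z ^ (n - l)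

/-- The Padé numerator polynomial `P_n` evaluated at `z`. -/
def Pval (x : ℚ) (n : ℕ) (z : ℂ) : ℂ :=
  ∑ l ∈ Finset.range n,
    ((∑ k ∈ Finset.Ico l n,
        (-1 : ℚ) ^ (n - k - 1) * poch ((n : ℚ) + 1 + x) (k + 1) / (Nat.factorial (k + 1)) *
          poch ((k : ℚ) + 2 + x) (n - k - 1) / (Nat.factorial (n - k - 1)) *
          (1 + x) / ((k : ℚ) - (l : ℚ) + 1 + x) : ℚ) : ℂ) * z ^ l

/-- The shifted logarithm `f(z) = (1+x)·Σ_{k≥0} 1/((k+x+1) z^{k+1})`. -/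
def fval (x : ℚ) (z : ℂ) : ℂ :=
  (1 + (x : ℂ)) * ∑' k : ℕ, 1 / (((k : ℂ) + (x : ℂ) + 1) * z ^ (k + 1))

/-- The Padé remainder `R_n(z) = Q_n(z) f(z) − P_n(z)`. -/
def Rval (x : ℚ) (n : ℕ) (z : ℂ) : ℂ := Qval x n z * fval x z - Pval x n z

/-- Recurrence coefficient `A_n`. -/
def Acoef (x : ℚ) (n : ℕ) : ℚ :=
  (((n : ℚ) + x + 1) * ((n : ℚ) + 1)) / ((2 * n + x + 1) * (2 * n + x + 2))

/-- Recurrence coefficient `B_n`. -/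
def Bcoef (x : ℚ) (n : ℕ) : ℚ :=
  (2 * (n : ℚ) ^ 2 + (1 + x) * (2 * n + x)) / ((2 * n + x) * (2 * n + x + 2))

/-- Recurrence coefficient `C_n`. -/
def Ccoef (x : ℚ) (n : ℕ) : ℚ :=
  ((n : ℚ) * ((n : ℚ) + x)) / ((2 * n + x) * (2 * n + x + 1))

/-! ### Auxiliary lemmas -/

lemma poch_zero' (a : ℚ) : poch a 0 = 1 := by simp [poch]

lemma poch_succ (a : ℚ) (m : ℕ) : poch a (m+1) = poch a m * (a + m) := by
  simp [poch, ascPochhammer_succ_right]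

lemma poch_succ_left (a : ℚ) (m : ℕ) : poch a (m+1) = a * poch (a+1) m := by
  simp [poch, ascPochhammer_succ_left]

lemma poch_shift (a : ℚ) (m : ℕ) : a * poch (a+1) m = poch a m * (a + m) := by
  rw [← poch_succ_left, poch_succ]

/-- Coefficient of `z^j` in `Q_m`. -/
def aa (x : ℚ) (m j : ℕ) : ℚ :=
  if j ≤ m then
    (-1 : ℚ) ^ (m - j) * poch ((m : ℚ) + 1 + x) j / (Nat.factorial j) *
      poch ((j : ℚ) + 1 + x) (m - j) / (Nat.factorial (m - j))
  else 0

/-- Shifted coefficient (coefficient of `z^j` in `z·Q_n`). -/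
def shq (x : ℚ) (n j : ℕ) : ℚ := if j = 0 then 0 else aa x n (j-1)

def cq (x : ℚ) (m : ℕ) : ℚ := (1+x) / ((m:ℚ)+1+x)

/-- The tail polynomials appearing in `P_n`. -/
def Tz (x : ℚ) (z : ℂ) (j : ℕ) : ℂ :=
  ∑ l ∈ Finset.range j, ((cq x (j-1-l) : ℚ) : ℂ) * z ^ l

lemma aa_of_gt {x : ℚ} {m j : ℕ} (h : m < j) : aa x m j = 0 := by
  simp [aa, Nat.not_le.mpr h]

lemma aa_self (x : ℚ) (j d : ℕ) :
    aa x (j+d) j = (-1:ℚ)^d * poch ((j:ℚ)+(d:ℚ)+1+x) j * poch ((j:ℚ)+1+x) d /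
      ((Nat.factorial j) * (Nat.factorial d)) := by
  rw [aa, if_pos (by omega : j ≤ j + d), show j + d - j = d from by omega,
    show ((j+d:ℕ):ℚ)+1+x = (j:ℚ)+(d:ℚ)+1+x from by push_cast; ring]
  field_simp

/-! ### The coefficient identity, case by case -/

lemma coeff0 (x : ℚ) (hx : 0 ≤ x) (e : ℕ) :
    Acoef x (e+1) * aa x (e+2) 0 + Bcoef x (e+1) * aa x (e+1) 0
      + Ccoef x (e+1) * aa x e 0 = 0 := by
  have hE : (0:ℚ) ≤ (e:ℚ) := Nat.cast_nonneg e
  have hfe : ((Nat.factorial e : ℚ)) ≠ 0 := Nat.cast_ne_zero.mpr (Nat.factorial_ne_zero _)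
  have A1 := aa_self x 0 (e+2); rw [Nat.zero_add] at A1
  have A2 := aa_self x 0 (e+1); rw [Nat.zero_add] at A2
  have A3 := aa_self x 0 e; rw [Nat.zero_add] at A3
  rw [A1, A2, A3, poch_zero', poch_zero', poch_zero']
  rw [show ((0:ℕ):ℚ)+1+x = (1:ℚ)+x from by push_cast; ring]
  rw [poch_succ ((1:ℚ)+x) (e+1), poch_succ ((1:ℚ)+x) e]
  rw [Acoef, Bcoef, Ccoef, show ((e+1:ℕ):ℚ) = (e:ℚ)+1 from by push_cast; ring]
  rw [Nat.factorial_succ (e+1), Nat.factorial_succ e, pow_succ, pow_succ]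
  push_cast
  field_simp
  ring

lemma coeffDiag (x : ℚ) (hx : 0 ≤ x) (k : ℕ) :
    Acoef x (k+1) * aa x (k+2) (k+1) + Bcoef x (k+1) * aa x (k+1) (k+1)
      + Ccoef x (k+1) * aa x k (k+1) = aa x (k+1) k := by
  have hK : (0:ℚ) ≤ (k:ℚ) := Nat.cast_nonneg k
  have hfk : ((Nat.factorial k : ℚ)) ≠ 0 := Nat.cast_ne_zero.mpr (Nat.factorial_ne_zero _)
  have d2 : ((k:ℚ)+2+x) ≠ 0 := by positivity
  have d3 : (2*(k:ℚ)+2+x) ≠ 0 := by positivity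
  have A1 := aa_self x (k+1) 1; rw [show (k+1)+1 = k+2 from rfl] at A1
  have A2 := aa_self x (k+1) 0; rw [Nat.add_zero] at A2
  have A4 := aa_self x k 1
  rw [aa_of_gt (by omega : k < k+1), A1, A2, A4]
  rw [show ((k+1:ℕ):ℚ)+((1:ℕ):ℚ)+1+x = ((k:ℚ)+2+x)+1 from by push_cast; ring,
      show ((k+1:ℕ):ℚ)+((0:ℕ):ℚ)+1+x = (k:ℚ)+2+x from by push_cast; ring,
      show ((k:ℚ))+((1:ℕ):ℚ)+1+x = (k:ℚ)+2+x from by push_cast; ring,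
      show ((k+1:ℕ):ℚ)+1+x = (k:ℚ)+2+x from by push_cast; ring]
  set p : ℚ := poch ((k:ℚ)+2+x) (k+1) with hp
  have rA : ((k:ℚ)+2+x) * poch (((k:ℚ)+2+x)+1) (k+1) = p * (((k:ℚ)+2+x) + ((k:ℚ)+1)) := by
    have h := poch_shift ((k:ℚ)+2+x) (k+1); push_cast at h; linear_combination h
  have sA : poch (((k:ℚ)+2+x)+1) (k+1) = p * (((k:ℚ)+2+x) + ((k:ℚ)+1)) / ((k:ℚ)+2+x) := by
    field_simp; linear_combination rA
  have rB : p = poch ((k:ℚ)+2+x) k * (((k:ℚ)+2+x) + k) := poch_succ _ _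
  rw [sA, rB, poch_zero']
  rw [show poch ((k:ℚ)+1+x) 1 = ((k:ℚ)+1+x) from by
        rw [show (1:ℕ) = 0+1 from rfl, poch_succ, poch_zero']; push_cast; ring,
      show poch ((k:ℚ)+2+x) 1 = ((k:ℚ)+2+x) from by
        rw [show (1:ℕ) = 0+1 from rfl, poch_succ, poch_zero']; push_cast; ring]
  rw [Acoef, Bcoef, Ccoef, show ((k+1:ℕ):ℚ) = (k:ℚ)+1 from by push_cast; ring]
  rw [Nat.factorial_succ k, Nat.factorial_one, Nat.factorial_zero]
  push_cast
  field_simp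
  ring

lemma coeffTop (x : ℚ) (hx : 0 ≤ x) (n : ℕ) (hn : 1 ≤ n) :
    Acoef x n * aa x (n+1) (n+1) + Bcoef x n * aa x n (n+1)
      + Ccoef x n * aa x (n-1) (n+1) = aa x n n := by
  have hN : (0:ℚ) ≤ (n:ℚ) := Nat.cast_nonneg n
  have hfn : ((Nat.factorial n : ℚ)) ≠ 0 := Nat.cast_ne_zero.mpr (Nat.factorial_ne_zero _)
  have d1 : ((n:ℚ)+1+x) ≠ 0 := by positivity
  have A1 := aa_self x (n+1) 0; rw [Nat.add_zero] at A1
  have A2 := aa_self x n 0; rw [Nat.add_zero] at A2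
  rw [aa_of_gt (by omega : n < n+1), aa_of_gt (by omega : n-1 < n+1), A1, A2]
  rw [show ((n+1:ℕ):ℚ)+((0:ℕ):ℚ)+1+x = ((n:ℚ)+1+x)+1 from by push_cast; ring,
      show ((n:ℚ))+((0:ℕ):ℚ)+1+x = (n:ℚ)+1+x from by push_cast; ring]
  set p : ℚ := poch ((n:ℚ)+1+x) n with hp
  have rA : ((n:ℚ)+1+x) * poch (((n:ℚ)+1+x)+1) (n+1)
      = poch ((n:ℚ)+1+x) (n+1) * (((n:ℚ)+1+x) + ((n:ℚ)+1)) := by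
    have h := poch_shift ((n:ℚ)+1+x) (n+1); push_cast at h; linear_combination h
  have rB : poch ((n:ℚ)+1+x) (n+1) = p * (((n:ℚ)+1+x) + n) := poch_succ _ _
  have sA : poch (((n:ℚ)+1+x)+1) (n+1)
      = p * (((n:ℚ)+1+x) + n) * (((n:ℚ)+1+x) + ((n:ℚ)+1)) / ((n:ℚ)+1+x) := by
    field_simp; linear_combination rA + (((n:ℚ)+1+x) + ((n:ℚ)+1)) * rB
  rw [sA, poch_zero', poch_zero']
  rw [Acoef, Bcoef, Ccoef]
  rw [Nat.factorial_succ n]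
  push_cast
  field_simp
  ring

set_option maxRecDepth 10000 in
set_option maxHeartbeats 2000000 in
lemma coeffMain (x : ℚ) (hx : 0 ≤ x) (k e : ℕ) :
    Acoef x (k+e+2) * aa x (k+e+3) (k+1) + Bcoef x (k+e+2) * aa x (k+e+2) (k+1)
      + Ccoef x (k+e+2) * aa x (k+e+1) (k+1) = aa x (k+e+2) k := by
  have hK : (0:ℚ) ≤ (k:ℚ) := Nat.cast_nonneg k
  have hE : (0:ℚ) ≤ (e:ℚ) := Nat.cast_nonneg e
  have hfk : ((Nat.factorial k : ℚ)) ≠ 0 := Nat.cast_ne_zero.mpr (Nat.factorial_ne_zero _)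
  have hfe : ((Nat.factorial e : ℚ)) ≠ 0 := Nat.cast_ne_zero.mpr (Nat.factorial_ne_zero _)
  have d1 : ((k:ℚ)+(e:ℚ)+3+x) ≠ 0 := by positivity
  have d2 : ((k:ℚ)+(e:ℚ)+2+x) ≠ 0 := by positivity
  have d3 : (2*(k:ℚ)+(e:ℚ)+3+x) ≠ 0 := by positivity
  have d4 : ((k:ℚ)+1+x) ≠ 0 := by positivity
  have d5 : ((k:ℚ)+2+x+(e:ℚ)) ≠ 0 := by positivity
  have e1 : aa x (k+e+3) (k+1) = aa x ((k+1)+(e+2)) (k+1) := by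
    rw [show k+e+3 = (k+1)+(e+2) from by omega]
  have e2 : aa x (k+e+2) (k+1) = aa x ((k+1)+(e+1)) (k+1) := by
    rw [show k+e+2 = (k+1)+(e+1) from by omega]
  have e3 : aa x (k+e+1) (k+1) = aa x ((k+1)+e) (k+1) := by
    rw [show k+e+1 = (k+1)+e from by omega]
  have e4 : aa x (k+e+2) k = aa x (k+(e+2)) k := by
    rw [show k+e+2 = k+(e+2) from by omega]
  rw [e1, e2, e3, e4, aa_self, aa_self, aa_self, aa_self]
  rw [show ((k+1:ℕ):ℚ)+((e+2:ℕ):ℚ)+1+x = ((k:ℚ)+(e:ℚ)+3+x)+1 from by push_cast; ring,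
      show ((k+1:ℕ):ℚ)+((e+1:ℕ):ℚ)+1+x = (k:ℚ)+(e:ℚ)+3+x from by push_cast; ring,
      show ((k+1:ℕ):ℚ)+(e:ℚ)+1+x = (k:ℚ)+(e:ℚ)+2+x from by push_cast; ring,
      show ((k:ℚ)+((e+2:ℕ):ℚ)+1+x) = (k:ℚ)+(e:ℚ)+3+x from by push_cast; ring,
      show ((k+1:ℕ):ℚ)+1+x = ((k:ℚ)+1+x)+1 from by push_cast; ring]
  set p1 : ℚ := poch ((k:ℚ)+(e:ℚ)+3+x) (k+1) with hp1
  set p2 : ℚ := poch (((k:ℚ)+1+x)+1) e with hp2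
  have rA1 : ((k:ℚ)+(e:ℚ)+3+x) * poch (((k:ℚ)+(e:ℚ)+3+x)+1) (k+1)
      = p1 * (((k:ℚ)+(e:ℚ)+3+x) + ((k:ℚ)+1)) := by
    have h := poch_shift ((k:ℚ)+(e:ℚ)+3+x) (k+1); push_cast at h; linear_combination h
  have sA1 : poch (((k:ℚ)+(e:ℚ)+3+x)+1) (k+1)
      = p1 * (((k:ℚ)+(e:ℚ)+3+x) + ((k:ℚ)+1)) / ((k:ℚ)+(e:ℚ)+3+x) := by
    field_simp; linear_combination rA1
  have rA3 : ((k:ℚ)+(e:ℚ)+2+x) * p1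
      = poch ((k:ℚ)+(e:ℚ)+2+x) (k+1) * (((k:ℚ)+(e:ℚ)+2+x) + ((k:ℚ)+1)) := by
    have h := poch_shift ((k:ℚ)+(e:ℚ)+2+x) (k+1); push_cast at h
    rw [hp1, show ((k:ℚ)+(e:ℚ)+3+x) = ((k:ℚ)+(e:ℚ)+2+x)+1 from by ring]
    linear_combination h
  have d3' : (((k:ℚ)+(e:ℚ)+2+x) + ((k:ℚ)+1)) ≠ 0 := by
    intro h; linarith
  have sA3 : poch ((k:ℚ)+(e:ℚ)+2+x) (k+1)
      = ((k:ℚ)+(e:ℚ)+2+x) * p1 / (((k:ℚ)+(e:ℚ)+2+x) + ((k:ℚ)+1)) := by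
    rw [eq_div_iff d3']; linear_combination -rA3
  have rA4 : p1 = poch ((k:ℚ)+(e:ℚ)+3+x) k * (((k:ℚ)+(e:ℚ)+3+x) + k) := poch_succ _ _
  have rB1 : poch (((k:ℚ)+1+x)+1) (e+1) = p2 * ((((k:ℚ)+1+x)+1) + e) := poch_succ _ _
  have rB2 : poch (((k:ℚ)+1+x)+1) (e+2)
      = poch (((k:ℚ)+1+x)+1) (e+1) * ((((k:ℚ)+1+x)+1) + (e+1:ℕ)) := poch_succ _ _
  have rB4 : poch ((k:ℚ)+1+x) (e+2) = ((k:ℚ)+1+x) * poch (((k:ℚ)+1+x)+1) (e+1) :=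
    poch_succ_left _ _
  rw [sA1, sA3, rB4, rB2, rB1, rA4]
  rw [Acoef, Bcoef, Ccoef, show ((k+e+2:ℕ):ℚ) = (k:ℚ)+(e:ℚ)+2 from by push_cast; ring]
  rw [Nat.factorial_succ (k), Nat.factorial_succ (e+1), Nat.factorial_succ e, pow_succ, pow_succ]
  push_cast
  field_simp
  ring

lemma coeff_id (x : ℚ) (hx : 0 ≤ x) (n j : ℕ) (hn : 1 ≤ n) (hj : j ≤ n+1) :
    Acoef x n * aa x (n+1) j + Bcoef x n * aa x n j + Ccoef x n * aa x (n-1) j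
      = shq x n j := by
  by_cases hj0 : j = 0
  · subst hj0
    rw [shq, if_pos rfl]
    obtain ⟨e, rfl⟩ : ∃ e, n = e+1 := ⟨n-1, by omega⟩
    rw [show e+1+1 = e+2 from rfl, show e+1-1 = e from rfl]
    exact coeff0 x hx e
  obtain ⟨k, rfl⟩ : ∃ k, j = k+1 := ⟨j-1, by omega⟩
  rw [shq, if_neg (by omega : ¬ (k+1 = 0)), show k+1-1 = k from rfl]
  rcases Nat.lt_or_ge k n with hkn | hkn
  · -- k+1 ≤ n
    obtain ⟨d, rfl⟩ : ∃ d, n = k+1+d := ⟨n-(k+1), by omega⟩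
    cases d with
    | zero =>
      rw [show k+1+0 = k+1 from rfl, show k+1+1 = k+2 from rfl, show k+1-1 = k from rfl]
      exact coeffDiag x hx k
    | succ e =>
      rw [show k+1+(e+1) = k+e+2 from by omega, show k+e+2+1 = k+e+3 from by omega,
        show k+e+2-1 = k+e+1 from by omega]
      exact coeffMain x hx k e
  · -- k ≥ n, so k+1 = n+1, k = n
    have hkn' : k = n := by omega
    subst hkn'
    exact coeffTop x hx k (by omega)

/-! ### Telescoping identity -/

lemma aa_step (x : ℚ) (hx : 0 ≤ x) (n j : ℕ) (hj : j ≤ n) :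
    ((j:ℚ)+1)*((j:ℚ)+1+x) * aa x n (j+1) = -((((n:ℚ)+1+x)+j)*((n:ℚ)-j)) * aa x n j := by
  rcases Nat.lt_or_ge j n with hlt | hge
  · obtain ⟨e, rfl⟩ : ∃ e, n = j + (e+1) := ⟨n - j - 1, by omega⟩
    have hJ : (0:ℚ) ≤ (j:ℚ) := Nat.cast_nonneg j
    have hE : (0:ℚ) ≤ (e:ℚ) := Nat.cast_nonneg e
    have hfj : ((Nat.factorial j : ℚ)) ≠ 0 := Nat.cast_ne_zero.mpr (Nat.factorial_ne_zero _)
    have hfe : ((Nat.factorial e : ℚ)) ≠ 0 := Nat.cast_ne_zero.mpr (Nat.factorial_ne_zero _)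
    have d1 : ((j:ℚ)+1+x) ≠ 0 := by positivity
    have A1 := aa_self x (j+1) e; rw [show (j+1)+e = j+(e+1) from by omega] at A1
    have A2 := aa_self x j (e+1)
    rw [A1, A2]
    rw [show ((j+1:ℕ):ℚ)+(e:ℚ)+1+x = (j:ℚ)+(e:ℚ)+2+x from by push_cast; ring,
        show ((j:ℚ))+((e+1:ℕ):ℚ)+1+x = (j:ℚ)+(e:ℚ)+2+x from by push_cast; ring,
        show ((j+1:ℕ):ℚ)+1+x = ((j:ℚ)+1+x)+1 from by push_cast; ring]
    set q1 : ℚ := poch ((j:ℚ)+(e:ℚ)+2+x) j with hq1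
    set q2 : ℚ := poch ((j:ℚ)+1+x) e with hq2
    have r1 : poch ((j:ℚ)+(e:ℚ)+2+x) (j+1) = q1 * (((j:ℚ)+(e:ℚ)+2+x) + j) := poch_succ _ _
    have r2 : poch ((j:ℚ)+1+x) (e+1) = q2 * (((j:ℚ)+1+x) + e) := poch_succ _ _
    have rB : ((j:ℚ)+1+x) * poch (((j:ℚ)+1+x)+1) e = q2 * (((j:ℚ)+1+x) + e) := poch_shift _ _
    have sB : poch (((j:ℚ)+1+x)+1) e = q2 * (((j:ℚ)+1+x) + e) / ((j:ℚ)+1+x) := by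
      field_simp; linear_combination rB
    rw [r1, r2, sB, Nat.factorial_succ j, Nat.factorial_succ e, pow_succ]
    push_cast
    field_simp
    ring
  · have hje : j = n := le_antisymm hj hge
    subst hje
    rw [aa_of_gt (by omega : j < j+1)]
    simp

lemma Fzero (x : ℚ) (hx : 0 ≤ x) (n : ℕ) (hn : 1 ≤ n) :
    ∑ i ∈ Finset.range (n+1), aa x n i / ((i:ℚ)+1+x) = 0 := by
  have hN : (0:ℚ) < (n:ℚ) := by exact_mod_cast hn
  have d1 : ((n:ℚ)+1+x) ≠ 0 := by positivity
  set g : ℕ → ℚ := fun i => -(i:ℚ) * aa x n i / ((n:ℚ)*((n:ℚ)+1+x)) with hg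
  have tel := Finset.sum_range_sub g (n+1)
  have hcg : ∀ i ∈ Finset.range (n+1), aa x n i / ((i:ℚ)+1+x) = g (i+1) - g i := by
    intro i hi
    have hi' : i ≤ n := by simpa [Nat.lt_succ_iff] using Finset.mem_range.mp hi
    have step := aa_step x hx n i hi'
    have d2 : ((i:ℚ)+1+x) ≠ 0 := by positivity
    have d3 : ((i:ℚ)+1) ≠ 0 := by positivity
    have sStep : aa x n (i+1)
        = -((((n:ℚ)+1+x)+i)*((n:ℚ)-i)) * aa x n i / (((i:ℚ)+1)*((i:ℚ)+1+x)) := by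
      field_simp; linear_combination step
    simp only [hg]
    push_cast
    rw [sStep]
    field_simp
    ring
  rw [Finset.sum_congr rfl hcg, tel]
  have h1 : aa x n (n+1) = 0 := aa_of_gt (by omega)
  simp [hg, h1]

/-! ### Expansion of `Q` and `P` in terms of `aa` -/

lemma Qext1 (x : ℚ) (n : ℕ) (z : ℂ) :
    Qval x n z = ∑ j ∈ Finset.range (n+1), ((aa x n j : ℚ) : ℂ) * z ^ j := by
  rw [Qval, ← Finset.sum_range_reflect]
  refine Finset.sum_congr rfl fun j hj => ?_
  have hj' : j ≤ n := by simp at hj; omega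
  rw [show n+1-1-j = n-j from by omega, show n-(n-j) = j from by omega, aa, if_pos hj']

lemma Qext (x : ℚ) (n N : ℕ) (z : ℂ) (h : n+1 ≤ N) :
    Qval x n z = ∑ j ∈ Finset.range N, ((aa x n j : ℚ) : ℂ) * z ^ j := by
  rw [Qext1]
  refine Finset.sum_subset (Finset.range_subset_range.mpr h) fun j _ hj' => ?_
  rw [aa_of_gt (by simp at hj'; omega), Rat.cast_zero, zero_mul]

lemma zQ (x : ℚ) (n : ℕ) (z : ℂ) :
    z * (∑ j ∈ Finset.range (n+2), ((aa x n j : ℚ) : ℂ) * z ^ j)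
      = ∑ j ∈ Finset.range (n+2), ((shq x n j : ℚ) : ℂ) * z ^ j := by
  rw [Finset.sum_range_succ _ (n+1), aa_of_gt (by omega : n < n+1)]
  rw [Finset.sum_range_succ' (fun j => ((shq x n j : ℚ) : ℂ) * z ^ j) (n+1)]
  simp only [shq, Nat.add_sub_cancel]
  norm_num
  rw [Finset.mul_sum]
  refine Finset.sum_congr rfl fun j hj => ?_
  ring

/-! ### The recurrence for `Q` -/

lemma Qrec (x : ℚ) (hx : 0 ≤ x) (z : ℂ) (n : ℕ) (hn : 1 ≤ n) :
    (Acoef x n : ℂ) * Qval x (n + 1) z - (z - (Bcoef x n : ℂ)) * Qval x n z +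
      (Ccoef x n : ℂ) * Qval x (n - 1) z = 0 := by
  rw [Qext x (n+1) (n+2) z le_rfl, Qext x n (n+2) z (by omega), Qext x (n-1) (n+2) z (by omega),
    sub_mul, zQ]
  rw [Finset.mul_sum, Finset.mul_sum, Finset.mul_sum, ← Finset.sum_sub_distrib,
    ← Finset.sum_sub_distrib, ← Finset.sum_add_distrib]
  refine Finset.sum_eq_zero fun j hj => ?_
  have hj' : j ≤ n+1 := by simp at hj; omega
  have h0 : Acoef x n * aa x (n+1) j + Bcoef x n * aa x n j + Ccoef x n * aa x (n-1) j
      - shq x n j = 0 := by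
    rw [coeff_id x hx n j hn hj']; ring
  have h0' : ((Acoef x n : ℚ):ℂ) * ((aa x (n+1) j : ℚ):ℂ)
      + ((Bcoef x n : ℚ):ℂ) * ((aa x n j : ℚ):ℂ)
      + ((Ccoef x n : ℚ):ℂ) * ((aa x (n-1) j : ℚ):ℂ) - ((shq x n j : ℚ):ℂ) = 0 := by
    exact_mod_cast congrArg (fun q : ℚ => (q : ℂ)) h0
  linear_combination z ^ j * h0'

/-! ### The recurrence for `P` -/

lemma Pext1 (x : ℚ) (hx : 0 ≤ x) (n : ℕ) (z : ℂ) :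
    Pval x n z = ∑ j ∈ Finset.range (n+1), ((aa x n j : ℚ) : ℂ) * Tz x z j := by
  rw [Pval]
  have step1 : ∀ l ∈ Finset.range n,
      ((∑ k ∈ Finset.Ico l n,
        (-1 : ℚ) ^ (n - k - 1) * poch ((n : ℚ) + 1 + x) (k + 1) / (Nat.factorial (k + 1)) *
          poch ((k : ℚ) + 2 + x) (n - k - 1) / (Nat.factorial (n - k - 1)) *
          (1 + x) / ((k : ℚ) - (l : ℚ) + 1 + x) : ℚ) : ℂ) * z ^ l
      = ∑ k ∈ Finset.Ico l n, ((aa x n (k+1) * cq x (k-l) : ℚ) : ℂ) * z ^ l := by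
    intro l hl
    have hsum : (∑ k ∈ Finset.Ico l n,
        (-1 : ℚ) ^ (n - k - 1) * poch ((n : ℚ) + 1 + x) (k + 1) / (Nat.factorial (k + 1)) *
          poch ((k : ℚ) + 2 + x) (n - k - 1) / (Nat.factorial (n - k - 1)) *
          (1 + x) / ((k : ℚ) - (l : ℚ) + 1 + x))
        = ∑ k ∈ Finset.Ico l n, aa x n (k+1) * cq x (k-l) := by
      refine Finset.sum_congr rfl fun k hk => ?_
      obtain ⟨hlk, hkn⟩ := Finset.mem_Ico.mp hk
      rw [aa, if_pos (by omega : k+1 ≤ n), cq]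
      rw [show n - (k+1) = n-k-1 from by omega,
          show ((k+1:ℕ):ℚ)+1+x = (k:ℚ)+2+x from by push_cast; ring,
          show ((k-l:ℕ):ℚ) = (k:ℚ)-(l:ℚ) from by rw [Nat.cast_sub hlk]]
      ring
    rw [hsum, Rat.cast_sum, Finset.sum_mul]
  rw [Finset.sum_congr rfl step1]
  rw [Finset.range_eq_Ico, Finset.sum_Ico_Ico_comm 0 n
    (fun l k => ((aa x n (k+1) * cq x (k-l) : ℚ) : ℂ) * z ^ l)]
  simp only [← Finset.range_eq_Ico]
  rw [Finset.sum_range_succ' (fun j => ((aa x n j : ℚ) : ℂ) * Tz x z j) n]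
  have hT0 : Tz x z 0 = 0 := by simp [Tz]
  rw [hT0, mul_zero, add_zero]
  refine Finset.sum_congr rfl fun k hk => ?_
  rw [Tz, Finset.mul_sum]
  refine Finset.sum_congr rfl fun l hl => ?_
  rw [show k+1-1-l = k-l from by omega]
  push_cast
  ring

lemma Pext (x : ℚ) (hx : 0 ≤ x) (n N : ℕ) (z : ℂ) (h : n+1 ≤ N) :
    Pval x n z = ∑ j ∈ Finset.range N, ((aa x n j : ℚ) : ℂ) * Tz x z j := by
  rw [Pext1 x hx]
  refine Finset.sum_subset (Finset.range_subset_range.mpr h) fun j _ hj' => ?_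
  rw [aa_of_gt (by simp at hj'; omega), Rat.cast_zero, zero_mul]

lemma zT (x : ℚ) (z : ℂ) (j : ℕ) :
    z * Tz x z j = Tz x z (j+1) - ((cq x j : ℚ) : ℂ) := by
  cases j with
  | zero => simp [Tz]
  | succ k =>
    rw [Tz, Tz, Finset.sum_range_succ' (fun l => ((cq x (k+1+1-1-l) : ℚ) : ℂ) * z ^ l) (k+1)]
    simp only [show ∀ l : ℕ, k+1+1-1-(l+1) = k+1-1-l from fun l => by omega,
      show k+1+1-1-0 = k+1 from by omega, pow_zero, mul_one]
    rw [Finset.mul_sum]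
    rw [add_sub_cancel_right]
    refine Finset.sum_congr rfl fun l hl => ?_
    ring

lemma Prec (x : ℚ) (hx : 0 ≤ x) (z : ℂ) (n : ℕ) (hn : 1 ≤ n) :
    (Acoef x n : ℂ) * Pval x (n + 1) z - (z - (Bcoef x n : ℂ)) * Pval x n z +
      (Ccoef x n : ℂ) * Pval x (n - 1) z = 0 := by
  have zsum : z * (∑ j ∈ Finset.range (n+2), ((aa x n j : ℚ) : ℂ) * Tz x z j)
      = ∑ j ∈ Finset.range (n+2), ((shq x n j : ℚ) : ℂ) * Tz x z j
        - ∑ j ∈ Finset.range (n+2), ((aa x n j * cq x j : ℚ) : ℂ) := by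
    rw [Finset.mul_sum]
    have hper : ∀ j ∈ Finset.range (n+2),
        z * (((aa x n j : ℚ) : ℂ) * Tz x z j)
          = ((aa x n j : ℚ) : ℂ) * Tz x z (j+1) - ((aa x n j * cq x j : ℚ) : ℂ) := by
      intro j hj
      have h := zT x z j
      push_cast
      linear_combination ((aa x n j : ℚ) : ℂ) * h
    rw [Finset.sum_congr rfl hper, Finset.sum_sub_distrib]
    congr 1
    rw [Finset.sum_range_succ, aa_of_gt (by omega : n < n+1)]
    rw [Finset.sum_range_succ' (fun j => ((shq x n j : ℚ) : ℂ) * Tz x z j) (n+1)]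
    simp only [shq, Nat.add_sub_cancel]
    norm_num
  have hcq : (∑ j ∈ Finset.range (n+2), ((aa x n j * cq x j : ℚ) : ℂ)) = 0 := by
    have hq : (∑ j ∈ Finset.range (n+2), (aa x n j * cq x j : ℚ)) = 0 := by
      rw [Finset.sum_range_succ, aa_of_gt (by omega : n < n+1), zero_mul, add_zero]
      have hFz := Fzero x hx n hn
      have : ∀ j ∈ Finset.range (n+1), aa x n j * cq x j = (1+x) * (aa x n j / ((j:ℚ)+1+x)) := by
        intro j hj; rw [cq]; ring
      rw [Finset.sum_congr rfl this, ← Finset.mul_sum, hFz, mul_zero]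
    rw [← Rat.cast_sum, hq, Rat.cast_zero]
  rw [Pext x hx (n+1) (n+2) z le_rfl, Pext x hx n (n+2) z (by omega),
    Pext x hx (n-1) (n+2) z (by omega), sub_mul, zsum, hcq, sub_zero]
  rw [Finset.mul_sum, Finset.mul_sum, Finset.mul_sum, ← Finset.sum_sub_distrib,
    ← Finset.sum_sub_distrib, ← Finset.sum_add_distrib]
  refine Finset.sum_eq_zero fun j hj => ?_
  have hj' : j ≤ n+1 := by simp at hj; omega
  have h0 : Acoef x n * aa x (n+1) j + Bcoef x n * aa x n j + Ccoef x n * aa x (n-1) j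
      - shq x n j = 0 := by
    rw [coeff_id x hx n j hn hj']; ring
  have h0' : ((Acoef x n : ℚ):ℂ) * ((aa x (n+1) j : ℚ):ℂ)
      + ((Bcoef x n : ℚ):ℂ) * ((aa x n j : ℚ):ℂ)
      + ((Ccoef x n : ℚ):ℂ) * ((aa x (n-1) j : ℚ):ℂ) - ((shq x n j : ℚ):ℂ) = 0 := by
    exact_mod_cast congrArg (fun q : ℚ => (q : ℂ)) h0
  linear_combination Tz x z j * h0'

/-! ### Limits -/

lemma limA (x : ℚ) (hx : 0 ≤ x) : Filter.Tendsto (fun n : ℕ => (Acoef x n : ℝ)) Filter.atTop (nhds (1 / 4)) := by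
  have h1 : Filter.Tendsto (fun n : ℕ => ((n:ℝ))⁻¹) Filter.atTop (nhds 0) :=
    tendsto_inv_atTop_nhds_zero_nat
  have hA : Filter.Tendsto (fun n : ℕ => (1 + ((x:ℝ)+1)*(n:ℝ)⁻¹)) Filter.atTop (nhds 1) := by
    have := h1.const_mul ((x:ℝ)+1); simpa using tendsto_const_nhds.add this
  have hB : Filter.Tendsto (fun n : ℕ => (1 + (n:ℝ)⁻¹)) Filter.atTop (nhds 1) := by
    simpa using tendsto_const_nhds.add h1
  have hC : Filter.Tendsto (fun n : ℕ => (2 + ((x:ℝ)+1)*(n:ℝ)⁻¹)) Filter.atTop (nhds 2) := by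
    have := h1.const_mul ((x:ℝ)+1); simpa using tendsto_const_nhds.add this
  have hD : Filter.Tendsto (fun n : ℕ => (2 + ((x:ℝ)+2)*(n:ℝ)⁻¹)) Filter.atTop (nhds 2) := by
    have := h1.const_mul ((x:ℝ)+2); simpa using tendsto_const_nhds.add this
  have hall := (hA.mul hB).div (hC.mul hD) (by norm_num)
  norm_num at hall
  refine Filter.Tendsto.congr' ?_ hall
  filter_upwards [Filter.eventually_ge_atTop 1] with n hn
  simp only [Pi.div_apply]
  have hn' : (n:ℝ) ≠ 0 := Nat.cast_ne_zero.mpr (by omega)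
  have hxr : (0:ℝ) ≤ (x:ℝ) := by exact_mod_cast hx
  have hnn : (1:ℝ) ≤ (n:ℝ) := by exact_mod_cast hn
  have hd0 : (2*(n:ℝ)+(x:ℝ)+1) ≠ 0 := by intro hh; linarith
  have hd1 : (2*(n:ℝ)+(x:ℝ)+2) ≠ 0 := by intro hh; linarith
  rw [Acoef]
  push_cast
  field_simp
  ring


lemma limB (x : ℚ) (hx : 0 ≤ x) : Filter.Tendsto (fun n : ℕ => (Bcoef x n : ℝ)) Filter.atTop (nhds (1 / 2)) := by
  have h1 : Filter.Tendsto (fun n : ℕ => ((n:ℝ))⁻¹) Filter.atTop (nhds 0) :=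
    tendsto_inv_atTop_nhds_zero_nat
  have hA : Filter.Tendsto (fun n : ℕ => (2 + (2*((x:ℝ)+1))*(n:ℝ)⁻¹ + ((1+(x:ℝ))*(x:ℝ))*((n:ℝ)⁻¹*(n:ℝ)⁻¹)))
      Filter.atTop (nhds 2) := by
    have h2 := h1.const_mul (2*((x:ℝ)+1))
    have h3 := (h1.mul h1).const_mul ((1+(x:ℝ))*(x:ℝ))
    simpa using (tendsto_const_nhds.add h2).add h3
  have hC : Filter.Tendsto (fun n : ℕ => (2 + (x:ℝ)*(n:ℝ)⁻¹)) Filter.atTop (nhds 2) := by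
    have := h1.const_mul ((x:ℝ)); simpa using tendsto_const_nhds.add this
  have hD : Filter.Tendsto (fun n : ℕ => (2 + ((x:ℝ)+2)*(n:ℝ)⁻¹)) Filter.atTop (nhds 2) := by
    have := h1.const_mul ((x:ℝ)+2); simpa using tendsto_const_nhds.add this
  have hall := hA.div (hC.mul hD) (by norm_num)
  norm_num at hall
  refine Filter.Tendsto.congr' ?_ hall
  filter_upwards [Filter.eventually_ge_atTop 1] with n hn
  simp only [Pi.div_apply]
  have hn' : (n:ℝ) ≠ 0 := Nat.cast_ne_zero.mpr (by omega)
  have hxr : (0:ℝ) ≤ (x:ℝ) := by exact_mod_cast hx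
  have hnn : (1:ℝ) ≤ (n:ℝ) := by exact_mod_cast hn
  have hd0 : (2*(n:ℝ)+(x:ℝ)) ≠ 0 := by intro hh; linarith
  have hd1 : (2*(n:ℝ)+(x:ℝ)+2) ≠ 0 := by intro hh; linarith
  rw [Bcoef]
  push_cast
  field_simp
  ring


lemma limC (x : ℚ) (hx : 0 ≤ x) : Filter.Tendsto (fun n : ℕ => (Ccoef x n : ℝ)) Filter.atTop (nhds (1 / 4)) := by
  have h1 : Filter.Tendsto (fun n : ℕ => ((n:ℝ))⁻¹) Filter.atTop (nhds 0) :=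
    tendsto_inv_atTop_nhds_zero_nat
  have hA : Filter.Tendsto (fun n : ℕ => (1 + (x:ℝ)*(n:ℝ)⁻¹)) Filter.atTop (nhds 1) := by
    have := h1.const_mul ((x:ℝ)); simpa using tendsto_const_nhds.add this
  have hC : Filter.Tendsto (fun n : ℕ => (2 + (x:ℝ)*(n:ℝ)⁻¹)) Filter.atTop (nhds 2) := by
    have := h1.const_mul ((x:ℝ)); simpa using tendsto_const_nhds.add this
  have hD : Filter.Tendsto (fun n : ℕ => (2 + ((x:ℝ)+1)*(n:ℝ)⁻¹)) Filter.atTop (nhds 2) := by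
    have := h1.const_mul ((x:ℝ)+1); simpa using tendsto_const_nhds.add this
  have hall := hA.div (hC.mul hD) (by norm_num)
  norm_num at hall
  refine Filter.Tendsto.congr' ?_ hall
  filter_upwards [Filter.eventually_ge_atTop 1] with n hn
  simp only [Pi.div_apply]
  have hn' : (n:ℝ) ≠ 0 := Nat.cast_ne_zero.mpr (by omega)
  have hxr : (0:ℝ) ≤ (x:ℝ) := by exact_mod_cast hx
  have hnn : (1:ℝ) ≤ (n:ℝ) := by exact_mod_cast hn
  have hd0 : (2*(n:ℝ)+(x:ℝ)) ≠ 0 := by intro hh; linarith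
  have hd1 : (2*(n:ℝ)+(x:ℝ)+1) ≠ 0 := by intro hh; linarith
  rw [Ccoef]
  push_cast
  field_simp
  ring


/-! ### Main theorem -/

/-- `(P_n(z))`, `(Q_n(z))` and `(R_n(z))` each satisfy the recurrence
`A_n X_{n+1} − (z − B_n) X_n + C_n X_{n−1} = 0` for `n ≥ 1`; moreover
`A_n → 1/4`, `B_n → 1/2`, `C_n → 1/4`, so the characteristic equation of the recurrence
is `X² − 2(2z−1)X + 1 = 0`. -/
theorem pade_recurrence (x : ℚ) (hx0 : 0 ≤ x) (hx1 : x < 1)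
    (z : ℂ) (hz : 1 < ‖z‖) :
    (∀ n : ℕ, 1 ≤ n →
        (Acoef x n : ℂ) * Pval x (n + 1) z - (z - (Bcoef x n : ℂ)) * Pval x n z +
          (Ccoef x n : ℂ) * Pval x (n - 1) z = 0) ∧
      (∀ n : ℕ, 1 ≤ n →
        (Acoef x n : ℂ) * Qval x (n + 1) z - (z - (Bcoef x n : ℂ)) * Qval x n z +
          (Ccoef x n : ℂ) * Qval x (n - 1) z = 0) ∧
      (∀ n : ℕ, 1 ≤ n →
        (Acoef x n : ℂ) * Rval x (n + 1) z - (z - (Bcoef x n : ℂ)) * Rval x n z +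
          (Ccoef x n : ℂ) * Rval x (n - 1) z = 0) ∧
      Tendsto (fun n : ℕ => (Acoef x n : ℝ)) atTop (nhds (1 / 4)) ∧
      Tendsto (fun n : ℕ => (Bcoef x n : ℝ)) atTop (nhds (1 / 2)) ∧
      Tendsto (fun n : ℕ => (Ccoef x n : ℝ)) atTop (nhds (1 / 4)) := by
  refine ⟨fun n hn => Prec x hx0 z n hn, fun n hn => Qrec x hx0 z n hn, fun n hn => ?_,
    limA x hx0, limB x hx0, limC x hx0⟩
  have hP := Prec x hx0 z n hn
  have hQ := Qrec x hx0 z n hn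
  simp only [Rval]
  linear_combination fval x z * hQ - hP

end
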